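/- Let Λ ⊆ P₁(ℝ^d) be a tight family consisting of measures equivalent to Lebesgue measure, and for β ∈ Λ let ∇v_β denote the Brenier map from β to ν. Under Assumption (A), for every δ > 0 there exists a constant M = M(ν, Λ, δ) > 0 such that for every z ∈ ℝ^d with |z| ≥ M and every β ∈ Λ, one has ∇v_β(z) ∈ S_{z/|z|, δ}. -/

import Mathlib

open MeasureTheory ProbabilityTheory Filter Set
open scoped ENNReal InnerProductSpace Topology

noncomputable section

abbrev Ed (d : ℕ) : Type := EuclideanSpace ℝ (Fin d)

section Defs

variable {E : Type*} [NormedAddCommGroup E] [InnerProductSpace ℝ E] [CompleteSpace E]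
  [MeasurableSpace E] [BorelSpace E] [SecondCountableTopology E]
variable {Ω : Type*} [MeasurableSpace Ω]

/-- The (topological) support of a measure. -/
def msupport (ρ : Measure E) : Set E :=
  {x | ∀ U : Set E, IsOpen U → x ∈ U → 0 < ρ U}

/-- `ρ` has a finite second moment, i.e. `ρ ∈ 𝒫₂`. -/
def FiniteSecondMoment (ρ : Measure E) : Prop :=
  ∫⁻ x, (‖x‖₊ : ℝ≥0∞) ^ 2 ∂ρ < ⊤

/-- `ρ` has a finite first moment, i.e. `ρ ∈ 𝒫₁`. -/
def FiniteFirstMoment (ρ : Measure E) : Prop :=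
  ∫⁻ x, (‖x‖₊ : ℝ≥0∞) ∂ρ < ⊤

/-- Convex order `μ ≤_cx ν`: `∫ φ dμ ≤ ∫ φ dν` for all (integrable) convex `φ`. -/
def ConvexOrder (μ ν : Measure E) : Prop :=
  ∀ φ : E → ℝ, ConvexOn ℝ Set.univ φ → Integrable φ μ → Integrable φ ν →
    ∫ x, φ x ∂μ ≤ ∫ x, φ x ∂ν

/-- There is a martingale `(M_t)_{0 ≤ t ≤ 1}` with `M_0 ∼ μ`, `M_1 ∼ ν` and
`P(M_0 ∈ A, M_1 ∈ B) > 0`. -/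
def ExistsMartingaleHitting (μ ν : Measure E) (A B : Set E) : Prop :=
  ∃ (Ω' : Type) (mΩ' : MeasurableSpace Ω'),
    letI : MeasurableSpace Ω' := mΩ'
    ∃ (P' : Measure Ω') (ℱ : Filtration ℝ mΩ') (M : ℝ → Ω' → E),
      IsProbabilityMeasure P' ∧ Martingale M ℱ P' ∧
      P'.map (M 0) = μ ∧ P'.map (M 1) = ν ∧
      0 < P' {ω | M 0 ω ∈ A ∧ M 1 ω ∈ B}

/-- The pair `(μ, ν)` is irreducible. -/
def IrreduciblePair (μ ν : Measure E) : Prop :=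
  ∀ A B : Set E, MeasurableSet A → MeasurableSet B → 0 < μ A → 0 < ν B →
    ExistsMartingaleHitting μ ν A B

/-- Assumption (A): convex order, irreducibility, `C := conv(supp ν)` compact,
and `supp μ` contained in the interior of `C`. -/
structure AssumptionA (μ ν : Measure E) : Prop where
  cx : ConvexOrder μ ν
  irr : IrreduciblePair μ ν
  cptC : IsCompact (convexHull ℝ (msupport ν))
  suppInt : msupport μ ⊆ interior (convexHull ℝ (msupport ν))

/-- Maximal covariance `MCov(p₁, p₂) = sup_{q ∈ Cpl(p₁,p₂)} ∫ ⟨x₁, x₂⟩ q(dx₁,dx₂)`. -/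
def MCov (p₁ p₂ : Measure E) : ℝ :=
  ⨆ q : {q : Measure (E × E) // q.map Prod.fst = p₁ ∧ q.map Prod.snd = p₂},
    ∫ x : E × E, ⟪x.1, x.2⟫_ℝ ∂(q.1)

/-- Convolution of the measure `α` with the measure `γ`. -/
def mconvol (α γ : Measure E) : Measure E :=
  (α.prod γ).map fun p => p.1 + p.2

/-- The Bass functional `𝒱(α) = MCov(α ∗ γ, ν) − MCov(α, μ)`. -/
def calV (γ μ ν : Measure E) (α : Measure E) : ℝ :=
  MCov (mconvol α γ) ν - MCov α μ

/-- The sigma-algebra generated by a random variable. -/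
def sigmaGen {F : Type*} [MeasurableSpace F] (X : Ω → F) : MeasurableSpace Ω :=
  MeasurableSpace.comap X inferInstance

/-- `Z ∈ L²(m)`: `m`-measurable and square-integrable. -/
def MemL2Meas {Ω' : Type*} {mΩ' : MeasurableSpace Ω'} (P : @Measure Ω' mΩ')
    (m : MeasurableSpace Ω') (Z : Ω' → E) : Prop :=
  Measurable[m] Z ∧ MemLp Z 2 P

/-- The lifted Bass functional `V(Z) = sup { E[(Z+Γ)·Y − Z·X] : Y ∈ L²(ℋ), Y ∼ ν }`,
where `ℋ = σ(X, Γ)`. -/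
def bassV (P : Measure Ω) (ν : Measure E) (X Γ : Ω → E) (Z : Ω → E) : ℝ :=
  ⨆ Y : {Y : Ω → E // Measurable[sigmaGen X ⊔ sigmaGen Γ] Y ∧ MemLp Y 2 P ∧ P.map Y = ν},
    ∫ ω, (⟪Z ω + Γ ω, Y.1 ω⟫_ℝ - ⟪Z ω, X ω⟫_ℝ) ∂P

/-- `T` is the Brenier map from `ρ` to `η`: an a.e. gradient of a convex function pushing
`ρ` forward to `η`. -/
def IsBrenierMap (ρ η : Measure E) (T : E → E) : Prop :=
  Measurable T ∧ ρ.map T = η ∧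
    ∃ v : E → ℝ, ConvexOn ℝ Set.univ v ∧ ∀ᵐ x ∂ρ, HasGradientAt v (T x) x

/-- Convolution `(f ∗ γ)(z) = ∫ f (z + y) γ(dy)` of a map with a measure. -/
def gconv (γ : Measure E) (f : E → E) (z : E) : E :=
  ∫ y, f (z + y) ∂γ

/-- The standing probabilistic setup: `P` a probability measure carrying independent
random variables `X ∼ μ` and `Γ ∼ γ`, with `μ, ν ∈ 𝒫₂`. -/
structure BassSetup (P : Measure Ω) (γ μ ν : Measure E) (X Γ : Ω → E) : Prop where
  prob : IsProbabilityMeasure P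
  probν : IsProbabilityMeasure ν
  fin2ν : FiniteSecondMoment ν
  measX : Measurable X
  measΓ : Measurable Γ
  indep : IndepFun X Γ P
  lawX : P.map X = μ
  lawΓ : P.map Γ = γ
  l2X : MemLp X 2 P

/-- `(X, Z)` is coupled monotonically: `E[⟨X, Z⟩] = MCov(law X, law Z)`. -/
def MonotoneCoupled (P : Measure Ω) (X Z : Ω → E) : Prop :=
  ∫ ω, ⟪X ω, Z ω⟫_ℝ ∂P = MCov (P.map X) (P.map Z)

/-- The `L²`-Bass gradient flow: an absolutely continuous curve `(ζ_t)_{t ≥ 0}` of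
`σ(X)`-measurable elements of `L²` satisfying, for a.e. `t ≥ 0`,
`dζ_t/dt = −((∇v_t ∗ γ)(ζ_t) − X)`, where `∇v_t` is the Brenier map from
`law(ζ_t) ∗ γ = law(ζ_t + Γ)` to `ν`. -/
def IsBassGradientFlow (P : Measure Ω) (γ ν : Measure E) (X Γ : Ω → E)
    (ζ : ℝ → Lp E 2 P) : Prop :=
  (∀ t : ℝ, 0 ≤ t → AEStronglyMeasurable[sigmaGen X] (ζ t : Ω → E) P) ∧
  ∃ g : ℝ → Lp E 2 P,
    (∀ t : ℝ, 0 ≤ t → ζ t = ζ 0 + ∫ s in (0:ℝ)..t, g s) ∧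
    ∀ᵐ t ∂(volume.restrict (Set.Ioi (0:ℝ))),
      ∃ T : E → E,
        IsBrenierMap (P.map fun ω => (ζ t : Ω → E) ω + Γ ω) ν T ∧
        (g t : Ω → E) =ᵐ[P] fun ω => X ω - gconv γ T ((ζ t : Ω → E) ω)

/-- `Z` minimizes the lifted Bass functional over `L²(σ(X))`. -/
def IsMinimizerV (P : Measure Ω) (ν : Measure E) (X Γ : Ω → E) (Z : Ω → E) : Prop :=
  ∀ W : Ω → E, MemL2Meas P (sigmaGen X) W → bassV P ν X Γ Z ≤ bassV P ν X Γ W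

/-- The support function `ℓ(a) = sup { ⟨y, a⟩ : y ∈ C }` of a set `C`. -/
def suppFn (C : Set E) (a : E) : ℝ := sSup ((fun y => ⟪y, a⟫_ℝ) '' C)

/-- The `δ`-slice `S_{a,δ} = { y ∈ C : ⟨y, a⟩ > ℓ(a) − δ }`. -/
def mslice (C : Set E) (a : E) (δ : ℝ) : Set E :=
  {y ∈ C | suppFn C a - δ < ⟪y, a⟫_ℝ}

/-- `Δ = inf { ℓ(a) − ⟨x, a⟩ : a ∈ S^{d−1}, x ∈ C_μ }`. -/
def bassDelta (μ ν : Measure E) : ℝ :=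
  sInf {r : ℝ | ∃ a : E, ‖a‖ = 1 ∧ ∃ x ∈ convexHull ℝ (msupport μ),
    r = suppFn (convexHull ℝ (msupport ν)) a - ⟪x, a⟫_ℝ}

/-- A tight family of measures. -/
def TightFamily (Λ : Set (Measure E)) : Prop :=
  ∀ ε : ℝ≥0∞, 0 < ε → ∃ K : Set E, IsCompact K ∧ ∀ β ∈ Λ, β Kᶜ ≤ ε

end Defs

section AuxLemmas

variable {E : Type*} [NormedAddCommGroup E] [InnerProductSpace ℝ E] [CompleteSpace E]
  [MeasurableSpace E] [BorelSpace E] [SecondCountableTopology E]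

theorem convex_inner_le {v : E → ℝ} (hv : ConvexOn ℝ Set.univ v) {g z : E}
    (h : HasGradientAt v g z) (y : E) : ⟪g, y - z⟫_ℝ ≤ v y - v z := by
  set f : ℝ → ℝ := fun t : ℝ => v (z + t • (y - z)) with hf
  have hφ : HasDerivAt (fun t : ℝ => z + t • (y - z)) (y - z) 0 := by
    simpa using ((hasDerivAt_id (0:ℝ)).smul_const (y - z)).const_add z
  have hc : HasDerivAt f ⟪g, y - z⟫_ℝ 0 := by
    have h' : HasFDerivAt v (InnerProductSpace.toDual ℝ E g) (z + (0:ℝ) • (y - z)) := by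
      simpa using h.hasFDerivAt
    exact (h'.comp_hasDerivAt 0 hφ).congr_deriv (by simp)
  have hT : Tendsto (slope f 0) (𝓝[>] (0:ℝ)) (𝓝 ⟪g, y - z⟫_ℝ) :=
    (hasDerivAt_iff_tendsto_slope.1 hc).mono_left
      (nhdsWithin_mono 0 (fun t ht => ne_of_gt ht))
  have hev : ∀ᶠ t in 𝓝[>] (0:ℝ), slope f 0 t ≤ v y - v z := by
    filter_upwards [Ioc_mem_nhdsGT_of_mem ⟨le_refl (0:ℝ), zero_lt_one⟩] with t ht
    have h01 : (0:ℝ) < t := ht.1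
    have hle : f t ≤ (1 - t) * v z + t * v y := by
      have hcomb := hv.2 (mem_univ z) (mem_univ y) (by linarith [ht.2] : (0:ℝ) ≤ 1 - t)
        (le_of_lt h01) (by ring)
      have heq : z + t • (y - z) = (1 - t) • z + t • y := by
        rw [smul_sub, sub_smul]; module
      simpa [hf, heq] using hcomb
    have hf0 : f 0 = v z := by simp [hf]
    rw [slope_def_field, sub_zero, div_le_iff₀ h01]
    nlinarith [hle, hf0]
  exact le_of_tendsto hT hev

theorem grad_monotone {v : E → ℝ} (hv : ConvexOn ℝ Set.univ v) {g₁ g₂ z y : E}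
    (h₁ : HasGradientAt v g₁ z) (h₂ : HasGradientAt v g₂ y) :
    0 ≤ ⟪g₁ - g₂, z - y⟫_ℝ := by
  have a := convex_inner_le hv h₁ y
  have b := convex_inner_le hv h₂ z
  have hsum : ⟪g₁, y - z⟫_ℝ + ⟪g₂, z - y⟫_ℝ ≤ 0 := by linarith
  have hy : (y - z) = -(z - y) := by abel
  rw [inner_sub_left]
  rw [hy, inner_neg_right] at hsum
  linarith

theorem isClosed_msupport (ρ : Measure E) : IsClosed (msupport ρ) := by
  rw [← isOpen_compl_iff, isOpen_iff_forall_mem_open]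
  intro x hx
  simp only [msupport, mem_compl_iff, mem_setOf_eq, not_forall] at hx
  obtain ⟨U, hU, hxU, hρ⟩ := hx
  refine ⟨U, fun y hy => ?_, hU, hxU⟩
  simp only [msupport, mem_compl_iff, mem_setOf_eq, not_forall]
  exact ⟨U, hU, hy, hρ⟩

theorem msupport_compl_null (ρ : Measure E) : ρ (msupport ρ)ᶜ = 0 := by
  obtain ⟨b, hbc, -, hb⟩ := TopologicalSpace.exists_countable_basis E
  set S : Set (Set E) := {U ∈ b | ρ U = 0} with hS
  have hnull : ρ (⋃₀ S) = 0 :=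
    (measure_sUnion_null_iff (hbc.mono (sep_subset _ _))).2 fun U hU => hU.2
  refine measure_mono_null (fun x hx => ?_) hnull
  simp only [msupport, mem_compl_iff, mem_setOf_eq, not_forall] at hx
  obtain ⟨U, hU, hxU, hρ⟩ := hx
  have hρ0 : ρ U = 0 := by
    by_contra h
    exact hρ (pos_iff_ne_zero.2 h)
  obtain ⟨V, hVb, hxV, hVU⟩ := hb.mem_nhds_iff.1 (hU.mem_nhds hxU)
  exact ⟨V, ⟨hVb, measure_mono_null hVU hρ0⟩, hxV⟩

theorem msupport_nonempty (ρ : Measure E) [IsProbabilityMeasure ρ] :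
    (msupport ρ).Nonempty := by
  rw [nonempty_iff_ne_empty]
  intro h
  have h2 := msupport_compl_null ρ
  rw [h, compl_empty] at h2
  simp [measure_univ] at h2

theorem le_suppFn' {C : Set E} {R : ℝ} (hR : ∀ y ∈ C, ‖y‖ ≤ R) {y : E} (hy : y ∈ C)
    (a : E) : ⟪y, a⟫_ℝ ≤ suppFn C a := by
  refine le_csSup ⟨R * ‖a‖, ?_⟩ ⟨y, hy, rfl⟩
  rintro r ⟨w, hw, rfl⟩
  exact (real_inner_le_norm w a).trans
    (mul_le_mul_of_nonneg_right (hR w hw) (norm_nonneg a))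

theorem suppFn_le' {C : Set E} (hne : C.Nonempty) {a : E} {r : ℝ}
    (h : ∀ y ∈ C, ⟪y, a⟫_ℝ ≤ r) : suppFn C a ≤ r := by
  refine csSup_le (hne.image _) ?_
  rintro s ⟨w, hw, rfl⟩
  exact h w hw

theorem suppFn_lipschitz' {C : Set E} (hne : C.Nonempty) {R : ℝ}
    (hR : ∀ y ∈ C, ‖y‖ ≤ R) (a b : E) :
    suppFn C a ≤ suppFn C b + R * ‖a - b‖ := by
  refine suppFn_le' hne fun y hy => ?_
  have h1 : ⟪y, a⟫_ℝ - ⟪y, b⟫_ℝ = ⟪y, a - b⟫_ℝ := (inner_sub_right y a b).symm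
  have h2 : ⟪y, a - b⟫_ℝ ≤ ‖y‖ * ‖a - b‖ := real_inner_le_norm _ _
  have h3 : ‖y‖ * ‖a - b‖ ≤ R * ‖a - b‖ :=
    mul_le_mul_of_nonneg_right (hR y hy) (norm_nonneg _)
  have h4 := le_suppFn' hR hy b
  linarith

theorem exists_msupport_near (ν : Measure E) [IsProbabilityMeasure ν] {R : ℝ}
    (hR : ∀ y ∈ convexHull ℝ (msupport ν), ‖y‖ ≤ R)
    (a : E) {ε : ℝ} (hε : 0 < ε) :
    ∃ y ∈ msupport ν, suppFn (convexHull ℝ (msupport ν)) a - ε < ⟪y, a⟫_ℝ := by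
  set C := convexHull ℝ (msupport ν) with hC
  have hCne : C.Nonempty := (msupport_nonempty ν).mono (subset_convexHull ℝ _)
  by_contra h
  push_neg at h
  have hlin : IsLinearMap ℝ (fun w : E => ⟪w, a⟫_ℝ) :=
    ⟨fun x y => inner_add_left x y a, fun c x => real_inner_smul_left x a c⟩
  have hconv : Convex ℝ {w : E | ⟪w, a⟫_ℝ ≤ suppFn C a - ε} :=
    convex_halfSpace_le hlin _
  have hsub : C ⊆ {w : E | ⟪w, a⟫_ℝ ≤ suppFn C a - ε} :=
    convexHull_min (fun y hy => h y hy) hconv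
  have := suppFn_le' hCne (fun y hy => hsub hy)
  linarith

end AuxLemmas

/-- The standard Gaussian measure on `ℝ^d`. -/
def stdGaussian (d : ℕ) : Measure (Ed d) :=
  (Measure.pi fun _ : Fin d => gaussianReal 0 1).map
    (MeasurableEquiv.toLp 2 (Fin d → ℝ))

/-- Assumptions (A4)-(A5): `ν` is absolutely continuous with a density which is essentially
bounded away from `0` on `I = int C` and essentially bounded from above on `ℝ`. -/
def NuDensityBounds (ν : Measure ℝ) : Prop :=
  ∃ f : ℝ → ℝ, Measurable f ∧ ν = volume.withDensity (fun x => ENNReal.ofReal (f x)) ∧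
    (∃ c : ℝ, 0 < c ∧ ∀ᵐ x ∂(volume : Measure ℝ),
        x ∈ interior (convexHull ℝ (msupport ν)) → c ≤ f x) ∧
    (∃ Cb : ℝ, ∀ᵐ x ∂(volume : Measure ℝ), f x ≤ Cb)

set_option maxHeartbeats 1000000 in
/-- Lemma 3.6 / `lem:Brenier boundary`. Let `Λ ⊆ 𝒫₁(ℝ^d)` be a tight
family of measures equivalent to Lebesgue measure and, for `β ∈ Λ`, let `∇v_β` be the
Brenier map from `β` to `ν`. Under Assumption (A), for every `δ > 0` there is
`M = M(ν,Λ,δ) > 0` such that `|z| ≥ M` implies `∇v_β(z) ∈ S_{z/|z|, δ}` for all `β ∈ Λ`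
(at every point `z` where the Brenier potential is differentiable). -/
theorem statement13
    {d : ℕ} {μ ν : Measure (Ed d)}
    [IsProbabilityMeasure μ] [IsProbabilityMeasure ν]
    (hspan : affineSpan ℝ (convexHull ℝ (msupport ν)) = ⊤)
    (hA : AssumptionA μ ν)
    (Λ : Set (Measure (Ed d)))
    (hΛ : ∀ β ∈ Λ, IsProbabilityMeasure β ∧ FiniteFirstMoment β ∧
      β ≪ (volume : Measure (Ed d)) ∧ (volume : Measure (Ed d)) ≪ β)
    (htight : TightFamily Λ) :
    ∀ δ : ℝ, 0 < δ → ∃ M : ℝ, 0 < M ∧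
      ∀ β ∈ Λ, ∀ v : Ed d → ℝ, ConvexOn ℝ Set.univ v →
        (∃ T : Ed d → Ed d, Measurable T ∧ (∀ᵐ x ∂β, HasGradientAt v (T x) x) ∧
          β.map T = ν) →
        ∀ z gz : Ed d, M ≤ ‖z‖ → HasGradientAt v gz z →
          gz ∈ mslice (convexHull ℝ (msupport ν)) (‖z‖⁻¹ • z) δ := by
  intro δ hδ
  classical
  set C : Set (Ed d) := convexHull ℝ (msupport ν) with hCdef
  have hCcpt : IsCompact C := hA.cptC
  have hCclosed : IsClosed C := hCcpt.isClosed
  have hCconv : Convex ℝ C := convex_convexHull ℝ _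
  have hsuppC : msupport ν ⊆ C := subset_convexHull ℝ _
  have hCne : C.Nonempty := (msupport_nonempty ν).mono hsuppC
  obtain ⟨R0, hR0b⟩ := hCcpt.isBounded.subset_closedBall 0
  set R : ℝ := max R0 1 with hRdef
  have hR1 : (1:ℝ) ≤ R := le_max_right _ _
  have hRpos : (0:ℝ) < R := lt_of_lt_of_le one_pos hR1
  have hRC : ∀ y ∈ C, ‖y‖ ≤ R := by
    intro y hy
    have h := hR0b hy
    rw [Metric.mem_closedBall, dist_zero_right] at h
    exact h.trans (le_max_left _ _)
  have hνCc : ν Cᶜ = 0 :=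
    measure_mono_null (compl_subset_compl.2 hsuppC) (msupport_compl_null ν)
  set ρ : ℝ := δ / (8 * R) with hρdef
  have hρpos : 0 < ρ := by positivity
  have hkey : ∀ i : Metric.sphere (0 : Ed d) 1,
      ∃ y ∈ msupport ν, suppFn C (i : Ed d) - δ/8 < ⟪y, (i : Ed d)⟫_ℝ :=
    fun i => exists_msupport_near ν hRC _ (by positivity)
  choose y hy1 hy2 using hkey
  have hcover : Metric.sphere (0 : Ed d) 1 ⊆
      ⋃ i : Metric.sphere (0 : Ed d) 1, Metric.ball (i : Ed d) ρ := fun a ha =>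
    mem_iUnion.2 ⟨⟨a, ha⟩, Metric.mem_ball_self hρpos⟩
  obtain ⟨t, ht⟩ := (isCompact_sphere (0 : Ed d) 1).elim_finite_subcover
    (fun i : Metric.sphere (0 : Ed d) 1 => Metric.ball (i : Ed d) ρ)
    (fun i => Metric.isOpen_ball) hcover
  set ε₀ : ℝ≥0∞ := min 1 (t.inf fun i => ν (Metric.ball (y i) (δ/8))) with hε₀def
  have hε₀pos : 0 < ε₀ := by
    refine lt_min one_pos ?_
    refine (Finset.lt_inf_iff (by norm_num : (0:ℝ≥0∞) < ⊤)).2 fun i _ => ?_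
    exact hy1 i _ Metric.isOpen_ball (Metric.mem_ball_self (by positivity))
  have hε₀top : ε₀ ≠ ⊤ := ne_top_of_le_ne_top ENNReal.one_ne_top (min_le_left _ _)
  obtain ⟨K, hKcpt, hK⟩ := htight (ε₀/2) (ENNReal.div_pos hε₀pos.ne' (by norm_num))
  obtain ⟨RK0, hRK0b⟩ := hKcpt.isBounded.subset_closedBall 0
  set RK : ℝ := max RK0 1 with hRKdef
  have hRK1 : (1:ℝ) ≤ RK := le_max_right _ _
  have hRKK : ∀ x ∈ K, ‖x‖ ≤ RK := by
    intro x hx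
    have h := hRK0b hx
    rw [Metric.mem_closedBall, dist_zero_right] at h
    exact h.trans (le_max_left _ _)
  refine ⟨max 1 (4*(R+1)*(RK+1)/δ), lt_of_lt_of_le one_pos (le_max_left _ _), ?_⟩
  intro β hβ v hv hexT z gz hz hgrad
  obtain ⟨T, hTm, hTae, hTmap⟩ := hexT
  obtain ⟨hβprob, hβfin, hβac, hβac'⟩ := hΛ β hβ
  have hz1 : (1:ℝ) ≤ ‖z‖ := le_trans (le_max_left _ _) hz
  have hzpos : (0:ℝ) < ‖z‖ := lt_of_lt_of_le one_pos hz1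
  have hzM : 4*(R+1)*(RK+1)/δ ≤ ‖z‖ := le_trans (le_max_right _ _) hz
  set a : Ed d := ‖z‖⁻¹ • z with hadef
  have ha : ‖a‖ = 1 := by
    rw [hadef, norm_smul, norm_inv, norm_norm, inv_mul_cancel₀ hzpos.ne']
  have hza : z = ‖z‖ • a := by
    rw [hadef, smul_smul, mul_inv_cancel₀ hzpos.ne', one_smul]
  -- a.e. properties of T
  have haeT : ∀ᵐ x ∂β, HasGradientAt v (T x) x ∧ T x ∈ msupport ν := by
    refine hTae.and ?_
    have h0 : β (T ⁻¹' (msupport ν)ᶜ) = 0 := by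
      rw [← Measure.map_apply hTm (isClosed_msupport ν).measurableSet.compl, hTmap]
      exact msupport_compl_null ν
    rw [ae_iff]
    exact h0
  -- Part 1: gz ∈ C
  have hsub : ∀ u : Ed d, ‖u‖ = 1 → ⟪gz, u⟫_ℝ ≤ suppFn C u := by
    intro u hu
    have hstep : ∀ n : ℕ, ⟪gz, u⟫_ℝ ≤ suppFn C u + (‖gz‖ + R) * (1/((n:ℝ)+1)) := by
      intro n
      have hballpos : 0 < β (Metric.ball (z + ((n:ℝ)+1) • u) 1) := by
        rw [pos_iff_ne_zero]
        intro h0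
        exact absurd (hβac' h0)
          (Metric.measure_ball_pos (volume : Measure (Ed d)) _ one_pos).ne'
      have hgood : 0 < β (Metric.ball (z + ((n:ℝ)+1) • u) 1 ∩
          {x | HasGradientAt v (T x) x ∧ T x ∈ msupport ν}) := by
        have hGc : β {x | ¬(HasGradientAt v (T x) x ∧ T x ∈ msupport ν)} = 0 :=
          ae_iff.1 haeT
        have hsplit : β (Metric.ball (z + ((n:ℝ)+1) • u) 1) ≤
            β (Metric.ball (z + ((n:ℝ)+1) • u) 1 ∩
              {x | HasGradientAt v (T x) x ∧ T x ∈ msupport ν}) +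
            β {x | ¬(HasGradientAt v (T x) x ∧ T x ∈ msupport ν)} := by
          refine le_trans (measure_mono ?_) (measure_union_le _ _)
          intro x hx
          by_cases hxG : HasGradientAt v (T x) x ∧ T x ∈ msupport ν
          · exact Or.inl ⟨hx, hxG⟩
          · exact Or.inr hxG
        rw [hGc, add_zero] at hsplit
        exact lt_of_lt_of_le hballpos hsplit
      obtain ⟨x, hxball, hxgrad, hxsupp⟩ := nonempty_of_measure_ne_zero hgood.ne'
      have hTxC : T x ∈ C := hsuppC hxsupp
      have hTxR : ‖T x‖ ≤ R := hRC _ hTxC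
      have hmono := grad_monotone hv hgrad hxgrad
      have hxb : ‖(x - z) - ((n:ℝ)+1) • u‖ < 1 := by
        rw [Metric.mem_ball, dist_eq_norm] at hxball
        have he : (x - z) - ((n:ℝ)+1) • u = x - (z + ((n:ℝ)+1) • u) := by abel
        rw [he]
        exact hxball
      have h1 : ⟪gz - T x, x - z⟫_ℝ ≤ 0 := by
        have he : z - x = -(x - z) := by abel
        rw [he, inner_neg_right] at hmono
        linarith
      have hns : ‖gz - T x‖ ≤ ‖gz‖ + R := le_trans (norm_sub_le _ _) (by linarith)
      have h2 : ((n:ℝ)+1) * ⟪gz - T x, u⟫_ℝ ≤ ‖gz‖ + R := by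
        have he : ⟪gz - T x, ((n:ℝ)+1) • u⟫_ℝ
            = ⟪gz - T x, x - z⟫_ℝ - ⟪gz - T x, (x - z) - ((n:ℝ)+1) • u⟫_ℝ := by
          rw [← inner_sub_right]
          congr 1
          abel
        have hcs := abs_real_inner_le_norm (gz - T x) ((x - z) - ((n:ℝ)+1) • u)
        have hcs2 : ‖gz - T x‖ * ‖(x - z) - ((n:ℝ)+1) • u‖ ≤ (‖gz‖ + R) * 1 := by
          apply mul_le_mul hns (le_of_lt hxb) (norm_nonneg _)
          positivity
        rw [real_inner_smul_right] at he
        have := abs_le.1 hcs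
        rw [mul_one] at hcs2
        linarith
      have hTu : ⟪T x, u⟫_ℝ ≤ suppFn C u := le_suppFn' hRC hTxC u
      have hn1 : (0:ℝ) < (n:ℝ)+1 := by positivity
      rw [inner_sub_left] at h2
      have h3 : ⟪gz, u⟫_ℝ - ⟪T x, u⟫_ℝ ≤ (‖gz‖ + R) * (1/((n:ℝ)+1)) := by
        rw [mul_one_div, le_div_iff₀ hn1]
        linarith
      linarith
    have hlim : Tendsto (fun n : ℕ => suppFn C u + (‖gz‖ + R) * (1/((n:ℝ)+1)))
        atTop (𝓝 (suppFn C u + (‖gz‖ + R) * 0)) :=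
      tendsto_const_nhds.add
        (tendsto_const_nhds.mul tendsto_one_div_add_atTop_nhds_zero_nat)
    have := ge_of_tendsto' hlim hstep
    simpa using this
  have hgzC : gz ∈ C := by
    by_contra hgz
    obtain ⟨f, s, hfs, hsx⟩ := geometric_hahn_banach_closed_point hCconv hCclosed hgz
    set b : Ed d := (InnerProductSpace.toDual ℝ (Ed d)).symm f with hbdef
    have hfb : ∀ w, f w = ⟪b, w⟫_ℝ := fun w =>
      (InnerProductSpace.toDual_symm_apply).symm
    have hbne : b ≠ 0 := by
      intro hb0
      obtain ⟨y₀, hy₀⟩ := hCne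
      have h1 := hfs y₀ hy₀
      rw [hfb, hb0, inner_zero_left] at h1
      rw [hfb, hb0, inner_zero_left] at hsx
      linarith
    have hbpos : 0 < ‖b‖ := norm_pos_iff.2 hbne
    set u : Ed d := ‖b‖⁻¹ • b with hudef
    have hu : ‖u‖ = 1 := by
      rw [hudef, norm_smul, norm_inv, norm_norm, inv_mul_cancel₀ hbpos.ne']
    have hinn : ∀ w : Ed d, ⟪w, u⟫_ℝ = ‖b‖⁻¹ * f w := by
      intro w
      rw [hudef, real_inner_smul_right, hfb, real_inner_comm]
    have h1 : suppFn C u ≤ ‖b‖⁻¹ * s := by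
      refine suppFn_le' hCne fun w hw => ?_
      rw [hinn]
      exact mul_le_mul_of_nonneg_left (le_of_lt (hfs w hw)) (by positivity)
    have h2 := hsub u hu
    rw [hinn gz] at h2
    have h3 : ‖b‖⁻¹ * s < ‖b‖⁻¹ * f gz :=
      mul_lt_mul_of_pos_left hsx (by positivity)
    linarith
  -- Part 2
  have haS : a ∈ Metric.sphere (0 : Ed d) 1 := by
    rw [mem_sphere_zero_iff_norm]
    exact ha
  obtain ⟨i, hit, hai⟩ : ∃ i ∈ t, a ∈ Metric.ball (i : Ed d) ρ := by
    have hm := ht haS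
    simpa using mem_iUnion₂.1 hm
  have hi1 : ‖(i : Ed d)‖ = 1 := mem_sphere_zero_iff_norm.1 i.2
  have hBinc : Metric.ball (y i) (δ/8) ∩ C ⊆ mslice C a (δ/2) := by
    rintro w ⟨hwB, hwC⟩
    refine ⟨hwC, ?_⟩
    have hwy : ‖w - y i‖ < δ/8 := by
      rw [Metric.mem_ball, dist_eq_norm] at hwB
      exact hwB
    have hina : ‖a - (i : Ed d)‖ < ρ := by
      rw [Metric.mem_ball, dist_eq_norm] at hai
      exact hai
    have e1 : ⟪w, a⟫_ℝ = ⟪w, (i : Ed d)⟫_ℝ + ⟪w, a - (i : Ed d)⟫_ℝ := by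
      rw [← inner_add_right]
      congr 1
      abel
    have e2 : ⟪w, (i : Ed d)⟫_ℝ = ⟪y i, (i : Ed d)⟫_ℝ + ⟪w - y i, (i : Ed d)⟫_ℝ := by
      rw [← inner_add_left]
      congr 1
      abel
    have hwR : ‖w‖ ≤ R := hRC w hwC
    have b1 := abs_le.1 (abs_real_inner_le_norm w (a - (i : Ed d)))
    have b1' : ‖w‖ * ‖a - (i : Ed d)‖ ≤ R * ρ :=
      mul_le_mul hwR (le_of_lt hina) (norm_nonneg _) (le_of_lt hRpos)
    have b2 := abs_le.1 (abs_real_inner_le_norm (w - y i) (i : Ed d))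
    rw [hi1, mul_one] at b2
    have b3 := hy2 i
    have b4 : suppFn C a ≤ suppFn C (i : Ed d) + R * ‖a - (i : Ed d)‖ :=
      suppFn_lipschitz' hCne hRC _ _
    have b4' : R * ‖a - (i : Ed d)‖ ≤ R * ρ :=
      mul_le_mul_of_nonneg_left (le_of_lt hina) (le_of_lt hRpos)
    have hRρ : R * ρ = δ/8 := by
      rw [hρdef]
      field_simp
    linarith [b1.1, b1', b2.1, hwy, b3, b4, b4', hRρ, e1, e2]
  have hSmeas : MeasurableSet (mslice C a (δ/2)) := by
    have hopen : IsOpen {w : Ed d | suppFn C a - δ/2 < ⟪w, a⟫_ℝ} :=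
      isOpen_lt continuous_const (Continuous.inner continuous_id continuous_const)
    exact hCclosed.measurableSet.inter hopen.measurableSet
  have hνS : ε₀ ≤ ν (mslice C a (δ/2)) := by
    have h1 : ε₀ ≤ ν (Metric.ball (y i) (δ/8)) :=
      le_trans (min_le_right _ _) (Finset.inf_le hit)
    have h2 : ν (Metric.ball (y i) (δ/8)) ≤ ν (Metric.ball (y i) (δ/8) ∩ C) := by
      have h3 : ν (Metric.ball (y i) (δ/8)) ≤ ν (Metric.ball (y i) (δ/8) ∩ C) + ν Cᶜ := by
        refine le_trans (measure_mono ?_) (measure_union_le _ _)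
        intro w hw
        by_cases hwC : w ∈ C
        · exact Or.inl ⟨hw, hwC⟩
        · exact Or.inr hwC
      rwa [hνCc, add_zero] at h3
    exact le_trans h1 (le_trans h2 (measure_mono hBinc))
  have hpre : β (T ⁻¹' (mslice C a (δ/2))) = ν (mslice C a (δ/2)) := by
    rw [← hTmap, Measure.map_apply hTm hSmeas]
  have hgood : 0 < β ((T ⁻¹' (mslice C a (δ/2)) ∩ K) ∩
      {x | HasGradientAt v (T x) x}) := by
    rw [pos_iff_ne_zero]
    intro h0
    have hGc : β {x | ¬HasGradientAt v (T x) x} = 0 := ae_iff.1 hTae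
    have hsplit : β (T ⁻¹' (mslice C a (δ/2))) ≤
        β ((T ⁻¹' (mslice C a (δ/2)) ∩ K) ∩ {x | HasGradientAt v (T x) x}) +
        β Kᶜ + β {x | ¬HasGradientAt v (T x) x} := by
      refine le_trans (measure_mono ?_)
        (le_trans (measure_union_le _ _) (add_le_add_left (measure_union_le _ _) _))
      intro x hx
      by_cases h1 : x ∈ K
      · by_cases h2 : HasGradientAt v (T x) x
        · exact Or.inl (Or.inl ⟨⟨hx, h1⟩, h2⟩)
        · exact Or.inr h2
      · exact Or.inl (Or.inr h1)
    rw [h0, zero_add, hGc, add_zero, hpre] at hsplit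
    have hcontr : ε₀ ≤ ε₀ / 2 := le_trans hνS (hsplit.trans (hK β hβ))
    exact absurd hcontr (not_le.2 (ENNReal.half_lt_self hε₀pos.ne' hε₀top))
  obtain ⟨x, ⟨hxS, hxK⟩, hxgrad⟩ := nonempty_of_measure_ne_zero hgood.ne'
  have hTxC : T x ∈ C := hxS.1
  have hTxa : suppFn C a - δ/2 < ⟪T x, a⟫_ℝ := hxS.2
  have hTxR : ‖T x‖ ≤ R := hRC _ hTxC
  have hgzR : ‖gz‖ ≤ R := hRC _ hgzC
  have hxR : ‖x‖ ≤ RK := hRKK x hxK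
  have hmono := grad_monotone hv hgrad hxgrad
  refine ⟨hgzC, ?_⟩
  have e1 : ⟪gz, z⟫_ℝ = ‖z‖ * ⟪gz, a⟫_ℝ := by
    conv_lhs => rw [hza, real_inner_smul_right]
  have e2 : ⟪T x, z⟫_ℝ = ‖z‖ * ⟪T x, a⟫_ℝ := by
    conv_lhs => rw [hza, real_inner_smul_right]
  have expand : ⟪gz - T x, z - x⟫_ℝ
      = ⟪gz, z⟫_ℝ - ⟪gz, x⟫_ℝ - ⟪T x, z⟫_ℝ + ⟪T x, x⟫_ℝ := by
    rw [inner_sub_left, inner_sub_right, inner_sub_right]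
    ring
  have c1 := abs_le.1 (abs_real_inner_le_norm gz x)
  have c1' : ‖gz‖ * ‖x‖ ≤ R * RK := mul_le_mul hgzR hxR (norm_nonneg _) (le_of_lt hRpos)
  have c2 := abs_le.1 (abs_real_inner_le_norm (T x) x)
  have c2' : ‖T x‖ * ‖x‖ ≤ R * RK := mul_le_mul hTxR hxR (norm_nonneg _) (le_of_lt hRpos)
  have key1 : ‖z‖ * ⟪gz, a⟫_ℝ ≥ ‖z‖ * ⟪T x, a⟫_ℝ - 2*(R*RK) := by
    rw [expand, e1, e2] at hmono
    linarith [c1.1, c1.2, c2.1, c2.2]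
  have key2 : ‖z‖ * (suppFn C a - δ/2) < ‖z‖ * ⟪T x, a⟫_ℝ :=
    mul_lt_mul_of_pos_left hTxa hzpos
  have key3 : 4*(R+1)*(RK+1) ≤ ‖z‖ * δ := (div_le_iff₀ hδ).1 hzM
  have final : ‖z‖ * (suppFn C a - δ) < ‖z‖ * ⟪gz, a⟫_ℝ := by
    nlinarith [key1, key2, key3, hzpos, hRpos, hRK1, hR1]
  exact (mul_lt_mul_iff_right₀ hzpos).1 final


end
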